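/- Let p be an odd prime. For all integers u, v with 1 ≤ u < κ_p and 1 ≤ v < κ_p, one has γ_p(u·v^{-1}) = 0 in 𝔽_p (here v < κ_p ≤ p, so v is invertible mod p). -/

import Mathlib

def fermatQuotient (p : ℕ) (k : ℤ) : ℕ :=
  (((k ^ (p - 1) - 1) / p) % p).toNat

noncomputable def kappa (p : ℕ) : ℕ :=
  sInf {n : ℕ | 0 < n ∧ ¬ p ∣ n ∧ fermatQuotient p n ≠ 0}

-- (1+a)^m ≡ 1 + m a  mod a²
lemma one_add_pow_cong (a : ℤ) (m : ℕ) : a ^ 2 ∣ (1 + a) ^ m - (1 + m * a) := by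
  induction m with
  | zero => simp
  | succ n ih =>
    have h : (1 + a) ^ (n + 1) - (1 + (↑(n+1) : ℤ) * a)
        = (1 + a) * ((1 + a) ^ n - (1 + n * a)) + n * a ^ 2 := by push_cast; ring
    rw [h]
    exact dvd_add (ih.mul_left _) ⟨n, by ring⟩

lemma fq_zero_iff {p : ℕ} (hp : p.Prime) (k : ℤ) (h : (p : ℤ) ∣ k ^ (p - 1) - 1) :
    fermatQuotient p k = 0 ↔ (p : ℤ) ^ 2 ∣ k ^ (p - 1) - 1 := by
  obtain ⟨c, hc⟩ := h
  have hp0 : (p : ℤ) ≠ 0 := by exact_mod_cast hp.ne_zero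
  have hdiv : (k ^ (p - 1) - 1) / p = c := by rw [hc]; exact Int.mul_ediv_cancel_left c hp0
  unfold fermatQuotient
  rw [hdiv, hc]
  constructor
  · intro h0
    have : c % p = 0 := by
      have hnn : 0 ≤ c % p := Int.emod_nonneg c hp0
      omega
    have : (p:ℤ) ∣ c := Int.dvd_of_emod_eq_zero this
    obtain ⟨d, rfl⟩ := this
    exact ⟨d, by ring⟩
  · rintro ⟨d, hd⟩
    have : (p:ℤ) ∣ c := by
      have := mul_left_cancel₀ hp0 (by rw [hd]; ring : (p:ℤ) * c = p * (p * d))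
      exact ⟨d, this⟩
    simp [Int.emod_eq_zero_of_dvd this]


lemma kappa_le {p : ℕ} (hp : p.Prime) (hodd : Odd p) : kappa p ≤ p - 1 := by
  have hp2 : 2 < p := lt_of_le_of_ne hp.two_le (by rintro rfl; simp [Nat.odd_iff] at hodd)
  obtain ⟨m, hm⟩ := hodd
  have hm1 : 1 ≤ m := by omega
  set a : ℤ := (p:ℤ)^2 - 2*p with ha
  have hsq : ((p-1:ℤ))^2 = 1 + a := by ring
  have hkey : ((p:ℤ))^2 ∣ ((p-1:ℤ))^(p-1) - (1 + m * a) := by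
    have h1 : a^2 ∣ (1+a)^m - (1 + m*a) := one_add_pow_cong a m
    have h2 : ((p:ℤ))^2 ∣ a^2 := ⟨((p:ℤ)-2)^2, by ring⟩
    have h3 : ((p-1:ℤ))^(p-1) = (1+a)^m := by
      rw [← hsq, ← pow_mul]
      congr 1
      omega
    rw [h3]
    exact h2.trans h1
  have hpm : (p:ℤ) ∣ m * a := Dvd.dvd.mul_left ⟨(p:ℤ)-2, by ring⟩ m
  have hfermat : (p:ℤ) ∣ ((p-1:ℤ))^(p-1) - 1 := by
    have := (dvd_pow_self (p:ℤ) (two_ne_zero)).trans hkey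
    have h4 : ((p-1:ℤ))^(p-1) - 1 = (((p-1:ℤ))^(p-1) - (1 + m*a)) + m*a := by ring
    rw [h4]
    exact dvd_add this hpm
  have hfq : fermatQuotient p ((p:ℤ)-1) ≠ 0 := by
    rw [Ne, fq_zero_iff hp _ hfermat]
    intro hcon
    have h5 : ((p:ℤ))^2 ∣ m * a := by
      have := dvd_sub hcon hkey
      simpa using this
    have h7 : (p:ℤ) ∣ m * ((p:ℤ)-2) := by
      obtain ⟨c, hc⟩ := h5
      refine ⟨c, ?_⟩
      have hp0 : (p:ℤ) ≠ 0 := by positivity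
      apply mul_left_cancel₀ hp0
      have : m * a = (p:ℤ) * (m * ((p:ℤ)-2)) := by rw [ha]; ring
      rw [← this, hc]; ring
    have hpI : Prime (p:ℤ) := Int.prime_iff_natAbs_prime.mpr (by simpa using hp)
    rcases hpI.dvd_mul.mp h7 with h | h
    · have : (p:ℤ) ∣ m := h
      have := Int.le_of_dvd (by exact_mod_cast hm1) this
      omega
    · have : (p:ℤ) ∣ 2 := by
        have h8 : (2:ℤ) = (p:ℤ) - ((p:ℤ)-2) := by ring
        rw [h8]
        exact dvd_sub dvd_rfl h
      have := Int.le_of_dvd (by norm_num) this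
      omega
  have hmem : (p - 1) ∈ {n : ℕ | 0 < n ∧ ¬ p ∣ n ∧ fermatQuotient p n ≠ 0} := by
    refine ⟨by omega, ?_, ?_⟩
    · intro hd
      have := Nat.le_of_dvd (by omega) hd
      omega
    · have : ((p - 1 : ℕ) : ℤ) = (p:ℤ) - 1 := by push_cast [Nat.cast_sub hp.one_le]; ring
      rw [this]
      exact hfq
  exact Nat.sInf_le hmem

lemma pow_p_nat {p : ℕ} (hp : p.Prime) (hodd : Odd p) {n : ℕ} (hn : n < kappa p) :
    ((p:ℤ))^2 ∣ (n:ℤ)^p - n := by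
  haveI : Fact p.Prime := ⟨hp⟩
  rcases Nat.eq_zero_or_pos n with rfl | hn1
  · simp [zero_pow hp.ne_zero]
  have hnp : n < p := by have := kappa_le hp hodd; omega
  have hpn : ¬ p ∣ n := fun hd => by have := Nat.le_of_dvd hn1 hd; omega
  have hnot : n ∉ {k : ℕ | 0 < k ∧ ¬ p ∣ k ∧ fermatQuotient p k ≠ 0} :=
    Nat.notMem_of_lt_sInf hn
  have hfq : fermatQuotient p n = 0 := by
    by_contra h
    exact hnot ⟨hn1, hpn, h⟩
  have hne : (n : ZMod p) ≠ 0 := by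
    rw [Ne, ZMod.natCast_eq_zero_iff]
    exact hpn
  have hfermat : (p:ℤ) ∣ (n:ℤ)^(p-1) - 1 := by
    rw [← ZMod.intCast_zmod_eq_zero_iff_dvd]
    push_cast
    rw [ZMod.pow_card_sub_one_eq_one hne]
    ring
  have h2 : ((p:ℤ))^2 ∣ (n:ℤ)^(p-1) - 1 := (fq_zero_iff hp _ hfermat).mp hfq
  have h3 : (n:ℤ)^p - n = n * ((n:ℤ)^(p-1) - 1) := by
    rw [mul_sub, mul_one, ← pow_succ']
    congr 2
    omega
  rw [h3]
  exact h2.mul_left _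

lemma pow_p_int {p : ℕ} (hp : p.Prime) (hodd : Odd p) {s : ℤ} (hs : s.natAbs < kappa p) :
    ((p:ℤ))^2 ∣ s^p - s := by
  rcases Int.natAbs_eq s with h | h
  · rw [h]; exact pow_p_nat hp hodd hs
  · have hd := pow_p_nat hp hodd hs
    set n := s.natAbs with hn
    rw [h, Odd.neg_pow hodd]
    have heq : -(n:ℤ)^p - -(n:ℤ) = -((n:ℤ)^p - n) := by ring
    rw [heq]
    exact hd.neg_right

lemma choose_sub_one_cast {p : ℕ} (hp : p.Prime) :
    ∀ k, k < p → (((p-1).choose k : ZMod p)) = (-1)^k := by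
  intro k
  induction k with
  | zero => simp
  | succ j ih =>
    intro hj
    have hij := ih (by omega)
    have hcs : (p-1).choose j + (p-1).choose (j+1) = p.choose (j+1) := by
      have h1 : p = (p-1) + 1 := by omega
      rw [h1, Nat.choose_succ_succ]; simp
    have hdvd : p ∣ p.choose (j+1) := hp.dvd_choose_self (by omega) hj
    have hcast : ((p.choose (j+1) : ZMod p)) = 0 := by
      rw [ZMod.natCast_eq_zero_iff]
      exact hdvd
    have : ((p-1).choose j : ZMod p) + ((p-1).choose (j+1) : ZMod p) = 0 := by
      rw [← Nat.cast_add, hcs, hcast]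
    rw [hij] at this
    rw [pow_succ]
    linear_combination this

lemma choose_div_mul {p k : ℕ} (hp : p.Prime) (hk1 : 1 ≤ k) (hk2 : k ≤ p - 1) :
    k * (p.choose k / p) = (p-1).choose (k-1) := by
  have hkp : k < p := by have := hp.two_le; omega
  have hdvd : p ∣ p.choose k := hp.dvd_choose_self (by omega) hkp
  have h1 : p * (p-1).choose (k-1) = p.choose k * k := by
    have := Nat.add_one_mul_choose_eq (p-1) (k-1)
    have hps : (p-1) + 1 = p := by have := hp.two_le; omega
    have hks : (k-1) + 1 = k := by omega
    rwa [hps, hks] at this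
  have h2 : p.choose k = p * (p.choose k / p) := (Nat.mul_div_cancel' hdvd).symm
  rw [h2] at h1
  have := hp.pos
  apply Nat.eq_of_mul_eq_mul_left this
  rw [h1]; ring

lemma binom_split {p : ℕ} (hp : p.Prime) (hodd : Odd p) (w : ℤ) :
    (1 - w)^p + w^p - 1
      = p * ∑ i ∈ Finset.range (p-1), (-1)^(i+1) * w^(i+1) * ((p.choose (i+1) / p : ℕ) : ℤ) := by
  have hp1 : 1 ≤ p := hp.one_le
  have hbin : (-w + 1)^p = ∑ k ∈ Finset.range (p+1), (-w)^k * 1^(p-k) * (p.choose k : ℤ) :=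
    add_pow (-w) 1 p
  rw [Finset.sum_range_succ'] at hbin
  have hsplit : (Finset.range p) = Finset.range ((p-1)+1) := by congr 1; omega
  rw [hsplit, Finset.sum_range_succ] at hbin
  have htop : (-w)^(p-1+1) * 1^(p-(p-1+1)) * (p.choose (p-1+1) : ℤ) = -w^p := by
    have hpp : p - 1 + 1 = p := by omega
    rw [hpp, Nat.choose_self, Odd.neg_pow hodd]
    push_cast
    ring
  have hzero : (-w)^0 * 1^(p-0) * (p.choose 0 : ℤ) = 1 := by simp
  rw [htop, hzero] at hbin
  have hterm : ∀ i ∈ Finset.range (p-1),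
      (-w)^(i+1) * 1^(p-(i+1)) * (p.choose (i+1) : ℤ)
        = (p:ℤ) * ((-1)^(i+1) * w^(i+1) * ((p.choose (i+1) / p : ℕ) : ℤ)) := by
    intro i hi
    rw [Finset.mem_range] at hi
    have hdvd : p ∣ p.choose (i+1) := hp.dvd_choose_self (by omega) (by omega)
    have hc : (p.choose (i+1) : ℤ) = (p:ℤ) * ((p.choose (i+1) / p : ℕ) : ℤ) := by
      exact_mod_cast congrArg (Nat.cast : ℕ → ℤ) (Nat.mul_div_cancel' hdvd).symm
    rw [hc, neg_pow]
    ring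
  rw [Finset.sum_congr rfl hterm] at hbin
  rw [← Finset.mul_sum] at hbin
  have : (1 - w) = (-w + 1) := by ring
  rw [this, hbin]
  ring

def mirimanoff (p : ℕ) (t : ZMod p) : ZMod p :=
  ∑ j ∈ Finset.Icc 1 (p - 1), (j : ZMod p)⁻¹ * t ^ j

theorem mirimanoff_zero_of_lt_kappa (p : ℕ) (hp : p.Prime) (hodd : Odd p)
    (u v : ℕ) (hu1 : 1 ≤ u) (hu : u < kappa p) (hv1 : 1 ≤ v) (hv : v < kappa p) :
    mirimanoff p ((u : ZMod p) * (v : ZMod p)⁻¹) = 0 := by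
  haveI : Fact p.Prime := ⟨hp⟩
  have hkle := kappa_le hp hodd
  have hp2 : 2 < p := lt_of_le_of_ne hp.two_le (by rintro rfl; simp [Nat.odd_iff] at hodd)
  have hup : u < p := by omega
  have hvp : v < p := by omega
  have hpu : ¬ p ∣ u := fun hd => by have := Nat.le_of_dvd (by omega) hd; omega
  have hpv : ¬ p ∣ v := fun hd => by have := Nat.le_of_dvd (by omega) hd; omega
  set e : ℕ := p * (p - 1) - 1 with he
  set w : ℕ := u * v ^ e with hw
  have hpe : e + 1 = p * (p - 1) := by
    have h1 : 1 ≤ p * (p - 1) := by nlinarith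
    omega
  have hcop : Nat.Coprime v (p ^ 2) :=
    Nat.Coprime.pow_right 2 (hp.coprime_iff_not_dvd.mpr hpv).symm
  have heuler : v ^ (p * (p - 1)) ≡ 1 [MOD p ^ 2] := by
    have h := Nat.ModEq.pow_totient hcop
    rwa [Nat.totient_prime_pow hp (by norm_num : 0 < 2), pow_one] at h
  have hvpow1 : ((v : ZMod (p ^ 2))) ^ (p * (p - 1)) = 1 := by
    have h := (ZMod.natCast_eq_natCast_iff _ _ _).mpr heuler
    push_cast at h
    exact h
  have hvwu : (v : ZMod (p ^ 2)) * (w : ZMod (p ^ 2)) = (u : ZMod (p ^ 2)) := by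
    have : ((w : ℕ) : ZMod (p ^ 2)) = (u : ZMod (p ^ 2)) * (v : ZMod (p ^ 2)) ^ e := by
      rw [hw]; push_cast; ring
    rw [this]
    calc (v : ZMod (p ^ 2)) * ((u : ZMod (p ^ 2)) * (v : ZMod (p ^ 2)) ^ e)
        = (u : ZMod (p ^ 2)) * (v : ZMod (p ^ 2)) ^ (e + 1) := by ring
      _ = (u : ZMod (p ^ 2)) := by rw [hpe, hvpow1, mul_one]
  have hcastpow : ∀ s : ℤ, s.natAbs < kappa p →
      ((s : ZMod (p ^ 2))) ^ p = (s : ZMod (p ^ 2)) := by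
    intro s hs
    have hd := pow_p_int hp hodd hs
    have h0 : ((s ^ p - s : ℤ) : ZMod (p ^ 2)) = 0 := by
      rw [ZMod.intCast_zmod_eq_zero_iff_dvd]
      exact_mod_cast hd
    push_cast at h0
    linear_combination h0
  set S : ℤ := ∑ i ∈ Finset.range (p - 1),
      (-1) ^ (i + 1) * (w : ℤ) ^ (i + 1) * ((p.choose (i + 1) / p : ℕ) : ℤ) with hS
  have hX : (1 - (w : ℤ)) ^ p + (w : ℤ) ^ p - 1 = p * S := binom_split hp hodd (w : ℤ)
  have hunit : IsUnit ((v : ℕ) : ZMod (p ^ 2)) := (ZMod.isUnit_iff_coprime v (p ^ 2)).mpr hcop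
  have hXR : (((p : ℤ) * S : ℤ) : ZMod (p ^ 2)) = 0 := by
    rw [← hX]
    have hmul : ((v : ZMod (p ^ 2))) ^ p *
        (((1 - (w : ℤ)) ^ p + (w : ℤ) ^ p - 1 : ℤ) : ZMod (p ^ 2)) = 0 := by
      push_cast
      have hexp : ((v : ZMod (p ^ 2))) ^ p * ((1 - (w : ZMod (p ^ 2))) ^ p
            + (w : ZMod (p ^ 2)) ^ p - 1)
          = ((v : ZMod (p ^ 2)) * (1 - (w : ZMod (p ^ 2)))) ^ p
            + ((v : ZMod (p ^ 2)) * (w : ZMod (p ^ 2))) ^ p - (v : ZMod (p ^ 2)) ^ p := by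
        rw [mul_pow, mul_pow]; ring
      rw [hexp, hvwu]
      have h1 : (v : ZMod (p ^ 2)) * (1 - (w : ZMod (p ^ 2)))
          = (((v : ℤ) - (u : ℤ) : ℤ) : ZMod (p ^ 2)) := by
        push_cast
        rw [mul_sub, hvwu]
        ring
      rw [h1]
      have hs1 : ((v : ℤ) - (u : ℤ)).natAbs < kappa p := by omega
      have hs2 : ((u : ℤ)).natAbs < kappa p := by omega
      have hs3 : ((v : ℤ)).natAbs < kappa p := by omega
      have e1 := hcastpow _ hs1
      have e2 := hcastpow _ hs2
      have e3 := hcastpow _ hs3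
      push_cast at e2 e3
      rw [e1, e2, e3]
      push_cast
      ring
    exact (IsUnit.mul_right_eq_zero (hunit.pow p)).mp hmul
  have hdvd2 : (p : ℤ) ^ 2 ∣ (p : ℤ) * S := by
    have h := (ZMod.intCast_zmod_eq_zero_iff_dvd _ _).mp hXR
    exact_mod_cast h
  have hdvdS : (p : ℤ) ∣ S := by
    obtain ⟨c, hc⟩ := hdvd2
    refine ⟨c, ?_⟩
    have hp0 : (p : ℤ) ≠ 0 := by positivity
    apply mul_left_cancel₀ hp0
    rw [hc]; ring
  have hSz : ((S : ℤ) : ZMod p) = 0 := (ZMod.intCast_zmod_eq_zero_iff_dvd _ _).mpr hdvdS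
  -- identify t
  have hvz : ((v : ℕ) : ZMod p) ≠ 0 := by
    rw [Ne, ZMod.natCast_eq_zero_iff]
    exact hpv
  have hwt : ((w : ℕ) : ZMod p) = (u : ZMod p) * (v : ZMod p)⁻¹ := by
    have hve : ((v : ZMod p)) ^ e = (v : ZMod p)⁻¹ := by
      apply eq_inv_of_mul_eq_one_left
      calc ((v : ZMod p)) ^ e * (v : ZMod p) = (v : ZMod p) ^ (e + 1) := by rw [pow_succ]
        _ = ((v : ZMod p) ^ (p - 1)) ^ p := by rw [hpe, ← pow_mul]; ring_nf
        _ = 1 := by rw [ZMod.pow_card_sub_one_eq_one hvz, one_pow]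
    rw [hw]; push_cast; rw [hve]
  have hSmir : ((S : ℤ) : ZMod p) = - mirimanoff p ((w : ℕ) : ZMod p) := by
    rw [mirimanoff]
    have hIcc : Finset.Icc 1 (p - 1) = Finset.Ico 1 p := by
      rw [← Finset.Ico_add_one_right_eq_Icc]
      congr 1
      omega
    rw [hIcc, Finset.sum_Ico_eq_sum_range]
    rw [hS, Int.cast_sum, ← Finset.sum_neg_distrib]
    apply Finset.sum_congr rfl
    intro i hi
    rw [Finset.mem_range] at hi
    have hkb : (((i + 1 : ℕ)) : ZMod p) * ((p.choose (i + 1) / p : ℕ) : ZMod p)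
        = (-1) ^ i := by
      rw [← Nat.cast_mul, choose_div_mul hp (by omega) (by omega)]
      have := choose_sub_one_cast hp i (by omega)
      simpa using this
    have hk0 : (((i + 1 : ℕ)) : ZMod p) ≠ 0 := by
      rw [Ne, ZMod.natCast_eq_zero_iff]
      intro hd
      have := Nat.le_of_dvd (by omega) hd
      omega
    have hB : ((p.choose (i + 1) / p : ℕ) : ZMod p)
        = (((i + 1 : ℕ)) : ZMod p)⁻¹ * (-1) ^ i := by
      rw [← hkb, ← mul_assoc, inv_mul_cancel₀ hk0, one_mul]
    have h11 : ((-1 : ZMod p)) ^ (i + 1) * (-1) ^ i = -1 := by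
      have hsq : ((-1 : ZMod p)) ^ i * (-1) ^ i = 1 := by rw [← mul_pow]; norm_num
      rw [pow_succ]
      linear_combination -hsq
    rw [Nat.add_comm 1 i]
    rw [Int.cast_mul, Int.cast_mul, Int.cast_pow, Int.cast_neg, Int.cast_one,
      Int.cast_pow, Int.cast_natCast, Int.cast_natCast]
    rw [hB]
    linear_combination ((((i + 1 : ℕ)) : ZMod p)⁻¹ * ((w : ZMod p)) ^ (i + 1)) * h11
  rw [← hwt]
  have := hSmir
  rw [hSz] at this
  have h0 := this.symm
  rw [neg_eq_zero] at h0
  exact h0
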